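/- Define w_1 = a, w_2 = b, w_3 = ba, w_4 = baabbaa, and w_n = b·TM_{2n-8}·complement(TM_{2n-6})·complement(TM_{2n-6})' for n ≥ 5. Then for every n ≥ 0, the concatenation w_1·w_2·⋯·w_m is a prefix of the infinite Thue-Morse word for every m, equivalently: for every m ≥ 1, w_1⋯w_m is a prefix of TM_K for all sufficiently large K. -/

import Mathlib

/-- Alphabet {a,b} with a = false, b = true, a < b. -/
abbrev Letter := Bool

/-- Lexicographic order (proper prefixes are smaller). -/
def lexlt (x y : List Bool) : Prop := List.Lex (· < ·) x y

/-- Fibonacci words: F 0 = b, F 1 = a, F (k+2) = F (k+1) ++ F k. -/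
def Fib : ℕ → List Bool
  | 0 => [true]
  | 1 => [false]
  | (k+2) => Fib (k+1) ++ Fib k

/-- bitwise complement -/
def comp (w : List Bool) : List Bool := w.map (fun c => !c)

/-- Thue-Morse words: TM 0 = a, TM (k+1) = TM k ++ comp (TM k). -/
def TM : ℕ → List Bool
  | 0 => [false]
  | (k+1) => TM k ++ comp (TM k)

/-- Fueled Nyldon predicate: a string of length 1 is Nyldon; a longer string is
Nyldon iff it admits no factorization into ≥ 2 Nyldon words in lexicographically
non-decreasing order. -/
def NyldonAux : ℕ → List Bool → Prop
  | 0, _ => False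
  | (n+1), w =>
    w.length = 1 ∨ (1 < w.length ∧
      ¬ ∃ fs : List (List Bool), 2 ≤ fs.length ∧ fs.flatten = w ∧
        fs.Chain' lexlt ∧ ∀ u ∈ fs, NyldonAux n u)

def Nyldon (w : List Bool) : Prop := NyldonAux w.length w

/-- H k = Fib k with its first letter removed. -/
def H (k : ℕ) : List Bool := (Fib k).tail

/-- s is the longest Nyldon proper suffix of w. -/
def IsLnps (w s : List Bool) : Prop :=
  s <:+ w ∧ s ≠ w ∧ Nyldon s ∧
    ∀ t : List Bool, t <:+ w → t ≠ w → Nyldon t → t.length ≤ s.length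

/-- Thue-Morse morphism: τ(a)=ab, τ(b)=ba. -/
def tau (w : List Bool) : List Bool :=
  w.flatMap (fun c => if c then [true, false] else [false, true])

/-- The sequence w_n: w_1=a, w_2=b, w_3=ba, w_4=baabbaa,
w_n = b·TM_{2n-8}·comp(TM_{2n-6})·comp(TM_{2n-6})' for n ≥ 5. -/
def wseq : ℕ → List Bool
  | 0 => []
  | 1 => [false]
  | 2 => [true]
  | 3 => [true, false]
  | 4 => [true, false, false, true, true, false, false]
  | (n+5) => true :: (TM (2*n+2) ++ comp (TM (2*n+4)) ++ (comp (TM (2*n+4))).dropLast)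

/-- The twelve words t_i(k). -/
def tword : ℕ → ℕ → List Bool
  | 1, k => true :: (TM (2*k+1)).dropLast
  | 2, k => true :: TM (2*k+1)
  | 3, k => true :: (TM (2*k+1) ++ (comp (TM (2*k))).dropLast)
  | 4, k => true :: TM (2*k)
  | 5, k => true :: (TM (2*k) ++ TM (2*k-1) ++ (comp (TM (2*k-2))).dropLast)
  | 6, k => true :: (TM (2*k) ++ (TM (2*k+1)).dropLast)
  | 7, k => true :: (TM (2*k) ++ TM (2*k+1))
  | 8, k => true :: (TM (2*k) ++ TM (2*k+1) ++ (comp (TM (2*k))).dropLast)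
  | 9, k => true :: (TM (2*k) ++ (comp (TM (2*k+2))).dropLast)
  | 10, k => true :: (TM (2*k) ++ comp (TM (2*k+2)))
  | 11, k => true :: (TM (2*k) ++ TM (2*k+1) ++ (comp (TM (2*k+2))).dropLast)
  | 12, k => true :: (TM (2*k) ++ comp (TM (2*k+2)) ++ (comp (TM (2*k+2))).dropLast)
  | _, _ => []

lemma comp_comp (w : List Bool) : comp (comp w) = w := by
  simp [comp, Function.comp_def]

lemma comp_append (u v : List Bool) : comp (u ++ v) = comp u ++ comp v := by
  simp [comp]

lemma comp_TM_succ (k : ℕ) : comp (TM (k+1)) = comp (TM k) ++ TM k := by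
  show comp (TM k ++ comp (TM k)) = _
  rw [comp_append, comp_comp]

lemma TM_mono : ∀ {k K : ℕ}, k ≤ K → TM k <+: TM K := by
  intro k K h
  induction K with
  | zero => cases Nat.le_zero.mp h; exact List.prefix_refl _
  | succ K ih =>
    rcases Nat.lt_or_ge k (K+1) with h' | h'
    · exact (ih (Nat.lt_succ_iff.mp h')).trans ⟨comp (TM K), rfl⟩
    · cases Nat.le_antisymm h h'; exact List.prefix_refl _

lemma TM_even_last : ∀ k : ℕ, ∃ u : List Bool, TM (2*k) = u ++ [false] := by
  intro k
  induction k with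
  | zero => exact ⟨[], rfl⟩
  | succ k ih =>
    obtain ⟨u, hu⟩ := ih
    refine ⟨TM (2*k+1) ++ comp (TM (2*k)) ++ u, ?_⟩
    have : 2 * (k+1) = (2*k+1) + 1 := by ring
    rw [this, show TM ((2*k+1)+1) = TM (2*k+1) ++ comp (TM (2*k+1)) from rfl,
      comp_TM_succ, hu]
    simp

lemma comp_TM_even_dropLast (k : ℕ) :
    (comp (TM (2*k))).dropLast ++ [true] = comp (TM (2*k)) := by
  obtain ⟨u, hu⟩ := TM_even_last k
  rw [hu, comp_append]
  show (comp u ++ [true]).dropLast ++ [true] = comp u ++ [true]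
  rw [List.dropLast_concat]

lemma key : ∀ j : ℕ,
    ((List.range (j+5)).map (fun i => wseq (i+1))).flatten
      = TM (2*j+5) ++ (comp (TM (2*j+4))).dropLast := by
  intro j
  induction j with
  | zero => decide
  | succ j ih =>
    have hrange : List.range (j+1+5) = List.range (j+5) ++ [j+5] := by
      rw [List.range_succ]
    rw [hrange, List.map_append, List.flatten_append, ih]
    have hw : wseq (j+5+1) = true ::
        (TM (2*(j+1)+2) ++ comp (TM (2*(j+1)+4)) ++ (comp (TM (2*(j+1)+4))).dropLast) := rfl
    simp only [List.map_cons, List.map_nil, List.flatten_cons, List.flatten_nil, List.append_nil, hw]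
    have h24 : 2*(j+1)+2 = 2*j+4 := by ring
    have h26 : 2*(j+1)+4 = 2*j+6 := by ring
    rw [h24, h26]
    have e1 : (comp (TM (2*j+4))).dropLast ++ (true ::
        (TM (2*j+4) ++ comp (TM (2*j+6)) ++ (comp (TM (2*j+6))).dropLast))
        = ((comp (TM (2*j+4))).dropLast ++ [true]) ++
          (TM (2*j+4) ++ comp (TM (2*j+6)) ++ (comp (TM (2*j+6))).dropLast) := by
      simp
    rw [List.append_assoc, e1]
    have h2k : 2*j+4 = 2*(j+2) := by ring
    rw [h2k, comp_TM_even_dropLast (j+2), ← h2k]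
    have hTM6 : TM (2*j+6) = TM (2*j+5) ++ (comp (TM (2*j+4)) ++ TM (2*j+4)) := by
      rw [show TM (2*j+6) = TM (2*j+5) ++ comp (TM (2*j+5)) from rfl,
        show (2*j+5 : ℕ) = (2*j+4)+1 from rfl, comp_TM_succ]
    have hTM7 : TM (2*j+7) = TM (2*j+6) ++ comp (TM (2*j+6)) := rfl
    have goal2 : 2*(j+1)+5 = 2*j+7 := by ring
    have goal4 : 2*(j+1)+4 = 2*j+6 := by ring
    rw [goal2, hTM7, hTM6]
    simp

theorem stmt17 : ∀ m : ℕ, 1 ≤ m → ∃ N : ℕ, ∀ K : ℕ, N ≤ K →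
    ((List.range m).map (fun i => wseq (i+1))).flatten <+: TM K := by
  intro m hm
  rcases Nat.lt_or_ge m 5 with h5 | h5
  · refine ⟨4, fun K hK => ?_⟩
    have hpre : ((List.range m).map (fun i => wseq (i+1))).flatten <+: TM 4 := by
      interval_cases m <;> decide
    exact hpre.trans (TM_mono hK)
  · obtain ⟨j, rfl⟩ := Nat.exists_eq_add_of_le h5
    rw [Nat.add_comm 5 j]
    have hkey := key j
    rw [hkey]
    refine ⟨2*j+6, fun K hK => ?_⟩
    refine List.IsPrefix.trans ?_ (TM_mono hK)
    have hTM6 : TM (2*j+6) = TM (2*j+5) ++ (comp (TM (2*j+4)) ++ TM (2*j+4)) := by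
      rw [show TM (2*j+6) = TM (2*j+5) ++ comp (TM (2*j+5)) from rfl,
        show (2*j+5 : ℕ) = (2*j+4)+1 from rfl, comp_TM_succ]
    rw [hTM6]
    obtain ⟨t, ht⟩ := (List.dropLast_prefix (comp (TM (2*j+4)))).trans
      (List.prefix_append (comp (TM (2*j+4))) (TM (2*j+4)))
    exact ⟨t, by rw [List.append_assoc, ht]⟩
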